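/- Let {S_λ : λ ≥ 0} and {T_μ : μ ≥ 0} be strongly continuous semigroups of isometries on a Hilbert space H satisfying S_λ T_μ = e^{iλμ} T_μ S_λ for all λ, μ ≥ 0. Then there exists a Hilbert space K containing H and strongly continuous one-parameter unitary groups {U_λ : λ ∈ ℝ}, {V_μ : μ ∈ ℝ} on K satisfying U_λ V_μ = e^{iλμ} V_μ U_λ for all real λ, μ, such that P_H U_λ|_H = S_λ and P_H V_μ|_H = T_μ for all λ, μ ≥ 0. -/

import Mathlib

open Complex Set Filter

noncomputable section

namespace WeylDilationAux

open ContinuousLinearMap UniformSpace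

local notation "⟪" x ", " y "⟫" => @inner ℂ _ _ x y

structure WSetup (H : Type) [NormedAddCommGroup H] [InnerProductSpace ℂ H]
    [CompleteSpace H] where
  S : ℝ → H →L[ℂ] H
  T : ℝ → H →L[ℂ] H
  hSiso : ∀ a : ℝ, 0 ≤ a → Isometry (S a)
  hTiso : ∀ b : ℝ, 0 ≤ b → Isometry (T b)
  hS0 : S 0 = ContinuousLinearMap.id ℂ H
  hT0 : T 0 = ContinuousLinearMap.id ℂ H
  hSadd : ∀ a b : ℝ, 0 ≤ a → 0 ≤ b → S (a + b) = (S a).comp (S b)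
  hTadd : ∀ a b : ℝ, 0 ≤ a → 0 ≤ b → T (a + b) = (T a).comp (T b)
  hScont : ∀ h : H, ContinuousOn (fun a : ℝ => S a h) (Ici 0)
  hTcont : ∀ h : H, ContinuousOn (fun b : ℝ => T b h) (Ici 0)
  hweyl : ∀ a b : ℝ, 0 ≤ a → 0 ≤ b →
      (S a).comp (T b) = Complex.exp (Complex.I * a * b) • (T b).comp (S a)

variable {H : Type} [NormedAddCommGroup H] [InnerProductSpace ℂ H] [CompleteSpace H]
  (σ : WSetup H)

lemma norm_S {a : ℝ} (ha : 0 ≤ a) (u : H) : ‖σ.S a u‖ = ‖u‖ :=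
  (σ.hSiso a ha).norm_map_of_map_zero (map_zero _) u

lemma norm_T {b : ℝ} (hb : 0 ≤ b) (u : H) : ‖σ.T b u‖ = ‖u‖ :=
  (σ.hTiso b hb).norm_map_of_map_zero (map_zero _) u

/-- `S a` as a linear isometry. -/
def Siso {a : ℝ} (ha : 0 ≤ a) : H →ₗᵢ[ℂ] H := ⟨(σ.S a : H →ₗ[ℂ] H), norm_S σ ha⟩

def Tiso {b : ℝ} (hb : 0 ≤ b) : H →ₗᵢ[ℂ] H := ⟨(σ.T b : H →ₗ[ℂ] H), norm_T σ hb⟩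

lemma inner_S {a : ℝ} (ha : 0 ≤ a) (u v : H) : ⟪σ.S a u, σ.S a v⟫ = ⟪u, v⟫ :=
  (Siso σ ha).inner_map_map u v

lemma inner_T {b : ℝ} (hb : 0 ≤ b) (u v : H) : ⟪σ.T b u, σ.T b v⟫ = ⟪u, v⟫ :=
  (Tiso σ hb).inner_map_map u v

/-- Extension of `S` to all of `ℝ`, using adjoints for negative times. -/
def Ssh (x : ℝ) : H →L[ℂ] H := if 0 ≤ x then σ.S x else adjoint (σ.S (-x))

lemma Ssh_of_nonneg {x : ℝ} (hx : 0 ≤ x) : Ssh σ x = σ.S x := if_pos hx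

lemma Ssh_of_neg {x : ℝ} (hx : x < 0) : Ssh σ x = adjoint (σ.S (-x)) := if_neg (not_le.2 hx)

lemma Ssh_zero : Ssh σ 0 = ContinuousLinearMap.id ℂ H := by
  rw [Ssh_of_nonneg σ le_rfl, σ.hS0]

lemma inner_Ssh_swap (x : ℝ) (u v : H) : ⟪Ssh σ x u, v⟫ = ⟪u, Ssh σ (-x) v⟫ := by
  rcases lt_trichotomy x 0 with hx | hx | hx
  · rw [Ssh_of_neg σ hx, Ssh_of_nonneg σ (by linarith), adjoint_inner_left]
  · subst hx; rw [neg_zero]; simp [Ssh_zero]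
  · rw [Ssh_of_nonneg σ hx.le, Ssh_of_neg σ (by linarith), neg_neg,
      adjoint_inner_right]

lemma norm_Ssh_le (x : ℝ) (u : H) : ‖Ssh σ x u‖ ≤ ‖u‖ := by
  rcases le_or_gt 0 x with hx | hx
  · rw [Ssh_of_nonneg σ hx, norm_S σ hx]
  · rw [Ssh_of_neg σ hx]
    have h1 : ‖adjoint (σ.S (-x))‖ ≤ 1 := by
      rw [ContinuousLinearMap.adjoint.norm_map (σ.S (-x))]
      refine ContinuousLinearMap.opNorm_le_bound _ zero_le_one fun w => ?_
      rw [norm_S σ (by linarith), one_mul]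
    calc ‖adjoint (σ.S (-x)) u‖ ≤ ‖adjoint (σ.S (-x))‖ * ‖u‖ := le_opNorm _ _
    _ ≤ 1 * ‖u‖ := by gcongr
    _ = ‖u‖ := one_mul _

/-- `⟪S a u, S b v⟫ = ⟪u, Ssh (b - a) v⟫` for `a, b ≥ 0`. -/
lemma inner_S_S {a b : ℝ} (ha : 0 ≤ a) (hb : 0 ≤ b) (u v : H) :
    ⟪σ.S a u, σ.S b v⟫ = ⟪u, Ssh σ (b - a) v⟫ := by
  rcases le_or_gt a b with h | h
  · have : σ.S b = (σ.S a).comp (σ.S (b - a)) := by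
      rw [← σ.hSadd a (b - a) ha (by linarith)]; ring_nf
    rw [this, Ssh_of_nonneg σ (by linarith)]
    simp only [ContinuousLinearMap.comp_apply]
    exact inner_S σ ha _ _
  · have : σ.S a = (σ.S b).comp (σ.S (a - b)) := by
      rw [← σ.hSadd b (a - b) hb (by linarith)]; ring_nf
    rw [this, Ssh_of_neg σ (by linarith), neg_sub]
    simp only [ContinuousLinearMap.comp_apply]
    rw [adjoint_inner_right]
    exact inner_S σ hb _ _


/-! ### Continuity lemmas -/

lemma cont_T_apply {α : Type*} [TopologicalSpace α] {c : α → ℝ} (hc : Continuous c)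
    (h0 : ∀ x, 0 ≤ c x) (u : H) : Continuous fun x => σ.T (c x) u :=
  (σ.hTcont u).comp_continuous hc fun x => mem_Ici.mpr (h0 x)

lemma cont_inner_Ssh (u v : H) : Continuous fun x : ℝ => ⟪u, Ssh σ x v⟫ := by
  have hf : Continuous fun x : ℝ => ⟪u, σ.S (max x 0) v⟫ :=
    Continuous.inner continuous_const <|
      (σ.hScont v).comp_continuous (continuous_id.max continuous_const)
        fun x => mem_Ici.mpr (le_max_right _ _)
  have hg : Continuous fun x : ℝ => ⟪σ.S (max (-x) 0) u, v⟫ :=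
    Continuous.inner ((σ.hScont u).comp_continuous (continuous_neg.max continuous_const)
        fun x => mem_Ici.mpr (le_max_right _ _)) continuous_const
  have heq : (fun x : ℝ => ⟪u, Ssh σ x v⟫) = fun x : ℝ =>
      if (fun _ : ℝ => (0:ℝ)) x ≤ (fun y : ℝ => y) x then ⟪u, σ.S (max x 0) v⟫
      else ⟪σ.S (max (-x) 0) u, v⟫ := by
    funext x
    rcases le_or_gt 0 x with hx | hx
    · rw [if_pos hx, Ssh_of_nonneg σ hx, max_eq_left hx]
    · rw [if_neg (not_le.2 hx), Ssh_of_neg σ hx, adjoint_inner_right,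
        max_eq_left (by linarith)]
  rw [heq]
  refine Continuous.if_le hf hg continuous_const continuous_id fun x hx => ?_
  subst hx  -- hx : 0 = x  (hopefully this orientation)
  simp [σ.hS0]

lemma cont_inner_Ssh' {α : Type*} [TopologicalSpace α] {w z : α → H} {c : α → ℝ}
    (hw : Continuous w) (hz : Continuous z) (hc : Continuous c) :
    Continuous fun t => ⟪w t, Ssh σ (c t) (z t)⟫ := by
  rw [continuous_iff_continuousAt]
  intro t₀
  have key : ∀ t, ⟪w t, Ssh σ (c t) (z t - z t₀)⟫ + ⟪w t - w t₀, Ssh σ (c t) (z t₀)⟫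
      + ⟪w t₀, Ssh σ (c t) (z t₀)⟫ = ⟪w t, Ssh σ (c t) (z t)⟫ := by
    intro t
    rw [map_sub, inner_sub_right, inner_sub_left]
    ring
  have h1 : Tendsto (fun t => ⟪w t, Ssh σ (c t) (z t - z t₀)⟫) (nhds t₀) (nhds 0) := by
    refine squeeze_zero_norm (a := fun t => ‖w t‖ * ‖z t - z t₀‖) (fun t => ?_) ?_
    · calc ‖⟪w t, Ssh σ (c t) (z t - z t₀)⟫‖ ≤ ‖w t‖ * ‖Ssh σ (c t) (z t - z t₀)‖ :=
        norm_inner_le_norm _ _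
      _ ≤ ‖w t‖ * ‖z t - z t₀‖ := by
          gcongr
          exact norm_Ssh_le σ _ _
    · have : Tendsto (fun t => ‖w t‖ * ‖z t - z t₀‖) (nhds t₀) (nhds (‖w t₀‖ * ‖z t₀ - z t₀‖)) :=
        ((hw.norm).tendsto t₀).mul (((hz.sub continuous_const).norm).tendsto t₀)
      simpa using this
  have h2 : Tendsto (fun t => ⟪w t - w t₀, Ssh σ (c t) (z t₀)⟫) (nhds t₀) (nhds 0) := by
    refine squeeze_zero_norm (a := fun t => ‖w t - w t₀‖ * ‖z t₀‖) (fun t => ?_) ?_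
    · calc ‖⟪w t - w t₀, Ssh σ (c t) (z t₀)⟫‖ ≤ ‖w t - w t₀‖ * ‖Ssh σ (c t) (z t₀)‖ :=
        norm_inner_le_norm _ _
      _ ≤ ‖w t - w t₀‖ * ‖z t₀‖ := by
          gcongr
          exact norm_Ssh_le σ _ _
    · have : Tendsto (fun t => ‖w t - w t₀‖ * ‖z t₀‖) (nhds t₀) (nhds (‖w t₀ - w t₀‖ * ‖z t₀‖)) :=
        (((hw.sub continuous_const).norm).tendsto t₀).mul tendsto_const_nhds
      simpa using this
  have h3 : Tendsto (fun t => ⟪w t₀, Ssh σ (c t) (z t₀)⟫) (nhds t₀)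
      (nhds ⟪w t₀, Ssh σ (c t₀) (z t₀)⟫) :=
    ((cont_inner_Ssh σ (w t₀) (z t₀)).tendsto (c t₀)).comp (hc.tendsto t₀)
  have := (h1.add h2).add h3
  rw [zero_add, zero_add] at this
  exact (this.congr key :)

/-! ### The kernel -/

/-- Canonical shift making both second coordinates nonnegative. -/
def DD (p q : ℝ × ℝ) : ℝ := max 0 (max (-p.2) (-q.2))

lemma DD_nonneg (p q : ℝ × ℝ) : 0 ≤ DD p q := le_max_left _ _

lemma DD_comm (p q : ℝ × ℝ) : DD p q = DD q p := by
  simp [DD, max_comm]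

lemma DD_fst (p q : ℝ × ℝ) : -p.2 ≤ DD p q := le_max_of_le_right (le_max_left _ _)

lemma DD_snd (p q : ℝ × ℝ) : -q.2 ≤ DD p q := le_max_of_le_right (le_max_right _ _)

/-- The positive-definite operator kernel of the dilation, in scalar form. -/
def kerI (p q : ℝ × ℝ) (u v : H) : ℂ :=
  cexp (I * (p.1 - q.1) * (DD p q)) *
    ⟪σ.T (p.2 + DD p q) u, Ssh σ (q.1 - p.1) (σ.T (q.2 + DD p q) v)⟫

lemma weyl_apply {x y : ℝ} (hx : 0 ≤ x) (hy : 0 ≤ y) (w : H) :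
    σ.S x (σ.T y w) = cexp (I * x * y) • σ.T y (σ.S x w) := by
  have := congrArg (fun A : H →L[ℂ] H => A w) (σ.hweyl x y hx hy)
  simpa using this

lemma kerI_core_shift_nonneg {b b' d c : ℝ} (hb : 0 ≤ b) (hb' : 0 ≤ b') (hd : 0 ≤ d)
    (hc : 0 ≤ c) (u v : H) :
    ⟪σ.T (b + d) u, Ssh σ c (σ.T (b' + d) v)⟫
      = cexp (I * c * d) * ⟪σ.T b u, Ssh σ c (σ.T b' v)⟫ := by
  rw [Ssh_of_nonneg σ hc]
  have hTu : σ.T (b + d) u = σ.T d (σ.T b u) := by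
    rw [show b + d = d + b from add_comm _ _, σ.hTadd d b hd hb]; rfl
  have hTv : ∀ w, σ.T (b' + d) w = σ.T d (σ.T b' w) := fun w => by
    rw [show b' + d = d + b' from add_comm _ _, σ.hTadd d b' hd hb']; rfl
  rw [weyl_apply σ hc (by linarith), hTu, hTv, inner_smul_right, inner_T σ hd,
    weyl_apply σ hc hb', inner_smul_right, ← mul_assoc, ← Complex.exp_add]
  congr 2
  push_cast
  ring

lemma kerI_core_shift {b b' d : ℝ} (c : ℝ) (hb : 0 ≤ b) (hb' : 0 ≤ b') (hd : 0 ≤ d) (u v : H) :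
    ⟪σ.T (b + d) u, Ssh σ c (σ.T (b' + d) v)⟫
      = cexp (I * c * d) * ⟪σ.T b u, Ssh σ c (σ.T b' v)⟫ := by
  rcases le_or_gt 0 c with hc | hc
  · exact kerI_core_shift_nonneg σ hb hb' hd hc u v
  · have key := kerI_core_shift_nonneg σ hb' hb hd (c := -c) (by linarith) v u
    rw [Ssh_of_nonneg σ (by linarith : (0:ℝ) ≤ -c)] at key
    have hswap : ∀ (y w : H) (x : ℝ), x < 0 → ⟪w, Ssh σ x y⟫ = ⟪σ.S (-x) w, y⟫ := by
      intro y w x hx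
      rw [Ssh_of_neg σ hx, adjoint_inner_right]
    rw [hswap _ _ _ hc, hswap _ _ _ hc, ← inner_conj_symm, key, map_mul,
      ← Complex.exp_conj, inner_conj_symm]
    congr 1
    rw [map_mul, map_mul, Complex.conj_I, Complex.conj_ofReal, Complex.conj_ofReal]
    push_cast
    ring

/-- The kernel computed with an arbitrary admissible shift. -/
lemma kerI_eq {p q : ℝ × ℝ} {d : ℝ} (h0 : 0 ≤ d) (h1 : -p.2 ≤ d) (h2 : -q.2 ≤ d) (u v : H) :
    kerI σ p q u v = cexp (I * (p.1 - q.1) * d) *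
      ⟪σ.T (p.2 + d) u, Ssh σ (q.1 - p.1) (σ.T (q.2 + d) v)⟫ := by
  have hD0 : DD p q ≤ d := by
    apply max_le h0 (max_le h1 h2)
  have e1 : p.2 + d = (p.2 + DD p q) + (d - DD p q) := by ring
  have e2 : q.2 + d = (q.2 + DD p q) + (d - DD p q) := by ring
  rw [e1, e2, kerI_core_shift σ (q.1 - p.1)
    (by have := DD_fst p q; linarith) (by have := DD_snd p q; linarith) (by linarith) u v,
    ← mul_assoc, ← Complex.exp_add, kerI]
  congr 2
  push_cast
  ring


lemma kerI_self (p : ℝ × ℝ) (u v : H) : kerI σ p p u v = ⟪u, v⟫ := by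
  have hb : 0 ≤ p.2 + DD p p := by have := DD_fst p p; linarith
  simp [kerI, sub_self, Ssh_zero, inner_T σ hb]

lemma kerI_conj (p q : ℝ × ℝ) (u v : H) :
    (starRingEnd ℂ) (kerI σ p q u v) = kerI σ q p v u := by
  rw [kerI, kerI, DD_comm q p, map_mul, ← Complex.exp_conj, ← inner_conj_symm,
    inner_Ssh_swap, neg_sub]
  congr 2
  · rw [map_mul, map_mul, Complex.conj_I, map_sub, Complex.conj_ofReal, Complex.conj_ofReal,
      Complex.conj_ofReal]
    ring
  · simp

lemma kerI_zero_left (p q : ℝ × ℝ) (v : H) : kerI σ p q 0 v = 0 := by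
  simp [kerI]

lemma kerI_zero_right (p q : ℝ × ℝ) (u : H) : kerI σ p q u 0 = 0 := by
  simp [kerI]

lemma kerI_add_left (p q : ℝ × ℝ) (u u' v : H) :
    kerI σ p q (u + u') v = kerI σ p q u v + kerI σ p q u' v := by
  simp [kerI, inner_add_left]
  ring

lemma kerI_add_right (p q : ℝ × ℝ) (u v v' : H) :
    kerI σ p q u (v + v') = kerI σ p q u v + kerI σ p q u v' := by
  simp [kerI, inner_add_right]
  ring

lemma kerI_smul_left (p q : ℝ × ℝ) (c : ℂ) (u v : H) :
    kerI σ p q (c • u) v = (starRingEnd ℂ) c * kerI σ p q u v := by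
  simp [kerI, inner_smul_left]
  ring

lemma kerI_smul_right (p q : ℝ × ℝ) (c : ℂ) (u v : H) :
    kerI σ p q u (c • v) = c * kerI σ p q u v := by
  simp [kerI, inner_smul_right]
  ring

/-- Factorization of the kernel through isometries, for a sufficiently large common shift. -/
lemma kerI_factor {p q : ℝ × ℝ} {m : ℝ} (hm0 : 0 ≤ m) (h1 : -p.1 ≤ m) (h2 : -q.1 ≤ m)
    (h3 : -p.2 ≤ m) (h4 : -q.2 ≤ m) (u v : H) :
    kerI σ p q u v = ⟪cexp (-(I * p.1 * m)) • σ.S (p.1 + m) (σ.T (p.2 + m) u),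
      cexp (-(I * q.1 * m)) • σ.S (q.1 + m) (σ.T (q.2 + m) v)⟫ := by
  rw [inner_smul_left, inner_smul_right,
    inner_S_S σ (by linarith) (by linarith), show q.1 + m - (p.1 + m) = q.1 - p.1 by ring,
    kerI_eq σ hm0 h3 h4, ← Complex.exp_conj, ← mul_assoc, ← Complex.exp_add]
  congr 2
  rw [map_neg, map_mul, map_mul, Complex.conj_I, Complex.conj_ofReal, Complex.conj_ofReal]
  push_cast
  ring

/-- Covariance of the kernel under common translation. -/
lemma kerI_translate (p q s : ℝ × ℝ) (u v : H) :
    kerI σ (p + s) (q + s) u v = cexp (I * (q.1 - p.1) * s.2) * kerI σ p q u v := by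
  set M : ℝ := max 0 (max (-p.2) (-q.2)) with hM
  have hM0 : 0 ≤ M := le_max_left _ _
  have hMp : -p.2 ≤ M := le_max_of_le_right (le_max_left _ _)
  have hMq : -q.2 ≤ M := le_max_of_le_right (le_max_right _ _)
  have habs : -s.2 ≤ |s.2| := neg_le_abs _
  have habs' : s.2 ≤ |s.2| := le_abs_self _
  have h0 : (0:ℝ) ≤ |s.2| + M := by positivity
  have lhs := kerI_eq σ (p := p + s) (q := q + s) (d := |s.2| + M) h0
    (by simp only [Prod.snd_add]; linarith) (by simp only [Prod.snd_add]; linarith) u v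
  have rhs := kerI_eq σ (p := p) (q := q) (d := s.2 + (|s.2| + M))
    (by linarith) (by linarith) (by linarith) u v
  rw [lhs, rhs]
  simp only [Prod.fst_add, Prod.snd_add]
  rw [show p.2 + s.2 + (|s.2| + M) = p.2 + (s.2 + (|s.2| + M)) by ring,
    show q.2 + s.2 + (|s.2| + M) = q.2 + (s.2 + (|s.2| + M)) by ring,
    show q.1 + s.1 - (p.1 + s.1) = q.1 - p.1 by ring, ← mul_assoc]
  congr 1
  rw [← Complex.exp_add]
  congr 1
  push_cast
  ring

/-- Joint continuity of the kernel in a translation of the first argument. -/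
lemma kerI_cont (p q : ℝ × ℝ) (u v : H) :
    Continuous fun t : ℝ × ℝ => kerI σ (p + t) q u v := by
  have hD : Continuous fun t : ℝ × ℝ => DD (p + t) q := by
    simp only [DD, Prod.snd_add]
    fun_prop
  have h1 : Continuous fun t : ℝ × ℝ => σ.T ((p + t).2 + DD (p + t) q) u := by
    refine cont_T_apply σ ?_ ?_ u
    · simp only [Prod.snd_add]; fun_prop
    · intro t
      have := DD_fst (p + t) q
      linarith
  have h2 : Continuous fun t : ℝ × ℝ => σ.T (q.2 + DD (p + t) q) v := by
    refine cont_T_apply σ ?_ ?_ v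
    · fun_prop
    · intro t
      have := DD_snd (p + t) q
      linarith
  have h3 : Continuous fun t : ℝ × ℝ =>
      ⟪σ.T ((p + t).2 + DD (p + t) q) u, Ssh σ (q.1 - (p + t).1) (σ.T (q.2 + DD (p + t) q) v)⟫ := by
    refine cont_inner_Ssh' σ h1 h2 ?_
    simp only [Prod.fst_add]; fun_prop
  have h4 : Continuous fun t : ℝ × ℝ => cexp (I * ((p + t).1 - q.1) * (DD (p + t) q)) := by
    refine Complex.continuous_exp.comp ?_
    simp only [Prod.fst_add]
    continuity
  exact h4.mul h3


/-! ### The pre-Hilbert space -/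

/-- The semi-inner product on finitely supported `H`-valued functions on `ℝ²`. -/
def BF (f g : (ℝ × ℝ) →₀ H) : ℂ :=
  ∑ p ∈ f.support, ∑ q ∈ g.support, kerI σ p q (f p) (g q)

lemma BF_eq_sum {f g : (ℝ × ℝ) →₀ H} {s t : Finset (ℝ × ℝ)}
    (hs : f.support ⊆ s) (ht : g.support ⊆ t) :
    BF σ f g = ∑ p ∈ s, ∑ q ∈ t, kerI σ p q (f p) (g q) := by
  rw [BF]
  rw [Finset.sum_subset hs]
  · refine Finset.sum_congr rfl fun p _ => ?_
    refine Finset.sum_subset ht fun q _ hq => ?_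
    rw [Finsupp.notMem_support_iff.mp hq, kerI_zero_right]
  · intro p _ hp
    refine Finset.sum_eq_zero fun q _ => ?_
    rw [Finsupp.notMem_support_iff.mp hp, kerI_zero_left]

lemma BF_add_left (f f' g : (ℝ × ℝ) →₀ H) :
    BF σ (f + f') g = BF σ f g + BF σ f' g := by
  rw [BF_eq_sum σ (Finsupp.support_add (g₁ := f) (g₂ := f'))
      (Finset.Subset.refl _) (s := f.support ∪ f'.support),
    BF_eq_sum σ Finset.subset_union_left (Finset.Subset.refl _) (s := f.support ∪ f'.support),
    BF_eq_sum σ Finset.subset_union_right (Finset.Subset.refl _) (s := f.support ∪ f'.support),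
    ← Finset.sum_add_distrib]
  refine Finset.sum_congr rfl fun p _ => ?_
  rw [← Finset.sum_add_distrib]
  refine Finset.sum_congr rfl fun q _ => ?_
  rw [Finsupp.add_apply, kerI_add_left]

lemma BF_add_right (f g g' : (ℝ × ℝ) →₀ H) :
    BF σ f (g + g') = BF σ f g + BF σ f g' := by
  rw [BF_eq_sum σ (Finset.Subset.refl _) (Finsupp.support_add (g₁ := g) (g₂ := g'))
      (t := g.support ∪ g'.support),
    BF_eq_sum σ (Finset.Subset.refl _) Finset.subset_union_left (t := g.support ∪ g'.support),
    BF_eq_sum σ (Finset.Subset.refl _) Finset.subset_union_right (t := g.support ∪ g'.support),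
    ← Finset.sum_add_distrib]
  refine Finset.sum_congr rfl fun p _ => ?_
  rw [← Finset.sum_add_distrib]
  refine Finset.sum_congr rfl fun q _ => ?_
  rw [Finsupp.add_apply, kerI_add_right]

lemma BF_smul_left (c : ℂ) (f g : (ℝ × ℝ) →₀ H) :
    BF σ (c • f) g = (starRingEnd ℂ) c * BF σ f g := by
  rw [BF_eq_sum σ Finsupp.support_smul (Finset.Subset.refl _) (s := f.support), BF,
    Finset.mul_sum]
  refine Finset.sum_congr rfl fun p _ => ?_
  rw [Finset.mul_sum]
  refine Finset.sum_congr rfl fun q _ => ?_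
  rw [Finsupp.smul_apply, kerI_smul_left]

lemma BF_smul_right (c : ℂ) (f g : (ℝ × ℝ) →₀ H) :
    BF σ f (c • g) = c * BF σ f g := by
  rw [BF_eq_sum σ (Finset.Subset.refl _) Finsupp.support_smul (t := g.support), BF,
    Finset.mul_sum]
  refine Finset.sum_congr rfl fun p _ => ?_
  rw [Finset.mul_sum]
  refine Finset.sum_congr rfl fun q _ => ?_
  rw [Finsupp.smul_apply, kerI_smul_right]

lemma BF_conj (f g : (ℝ × ℝ) →₀ H) : (starRingEnd ℂ) (BF σ g f) = BF σ f g := by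
  rw [BF, BF, map_sum, Finset.sum_comm]
  refine Finset.sum_congr rfl fun p _ => ?_
  rw [map_sum]
  exact Finset.sum_congr rfl fun q _ => kerI_conj σ _ _ _ _

lemma BF_single_single (p q : ℝ × ℝ) (u v : H) :
    BF σ (Finsupp.single p u) (Finsupp.single q v) = kerI σ p q u v := by
  rcases eq_or_ne u 0 with rfl | hu
  · rw [Finsupp.single_zero, kerI_zero_left]
    simp [BF]
  · rcases eq_or_ne v 0 with rfl | hv
    · rw [Finsupp.single_zero, kerI_zero_right]
      simp [BF]
    · rw [BF, Finsupp.support_single_ne_zero _ hu, Finsupp.support_single_ne_zero _ hv]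
      simp [Finsupp.single_eq_same]

lemma BF_nonneg (f : (ℝ × ℝ) →₀ H) : 0 ≤ (BF σ f f).re := by
  obtain ⟨m₀, hm₀⟩ := Finset.exists_le (f.support.image fun p => max (-p.1) (-p.2))
  set m : ℝ := max m₀ 0 with hm
  have hbound : ∀ p ∈ f.support, -p.1 ≤ m ∧ -p.2 ≤ m := by
    intro p hp
    have := hm₀ _ (Finset.mem_image_of_mem _ hp)
    constructor
    · calc -p.1 ≤ max (-p.1) (-p.2) := le_max_left _ _
        _ ≤ m₀ := this
        _ ≤ m := le_max_left _ _
    · calc -p.2 ≤ max (-p.1) (-p.2) := le_max_right _ _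
        _ ≤ m₀ := this
        _ ≤ m := le_max_left _ _
  have hm0 : 0 ≤ m := le_max_right _ _
  set G : ℝ × ℝ → H := fun p =>
    cexp (-(I * p.1 * m)) • σ.S (p.1 + m) (σ.T (p.2 + m) (f p)) with hG
  have key : BF σ f f = ⟪∑ p ∈ f.support, G p, ∑ q ∈ f.support, G q⟫ := by
    rw [sum_inner, BF]
    refine Finset.sum_congr rfl fun p hp => ?_
    rw [inner_sum]
    refine Finset.sum_congr rfl fun q hq => ?_
    exact kerI_factor σ hm0 (hbound p hp).1 (hbound q hq).1 (hbound p hp).2 (hbound q hq).2 _ _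
  rw [key]
  simpa using inner_self_nonneg (𝕜 := ℂ) (x := ∑ p ∈ f.support, G p)


/-! ### Translation operators on the pre-space -/

/-- The phase factor. -/
def ph (x d : ℝ) : ℂ := cexp (-(I * x * d))

lemma ph_zero (x : ℝ) : ph x 0 = 1 := by simp [ph]

/-- The projective translation action on the pre-space. -/
def piP (s : ℝ × ℝ) (f : (ℝ × ℝ) →₀ H) : (ℝ × ℝ) →₀ H :=
  f.sum fun p u => Finsupp.single (p + s) (ph (p.1 + s.1) s.2 • u)

lemma piP_single (s p : ℝ × ℝ) (u : H) :
    piP s (Finsupp.single p u) = Finsupp.single (p + s) (ph (p.1 + s.1) s.2 • u) :=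
  Finsupp.sum_single_index (by simp)

lemma piP_zero_map (s : ℝ × ℝ) : piP s (0 : (ℝ × ℝ) →₀ H) = 0 :=
  Finsupp.sum_zero_index

lemma piP_add (s : ℝ × ℝ) (f g : (ℝ × ℝ) →₀ H) :
    piP s (f + g) = piP s f + piP s g :=
  Finsupp.sum_add_index' (fun p => by simp) (fun p u v => by rw [smul_add, Finsupp.single_add])

lemma piP_smul (s : ℝ × ℝ) (c : ℂ) (f : (ℝ × ℝ) →₀ H) :
    piP s (c • f) = c • piP s f := by
  rw [piP, Finsupp.sum_smul_index' (fun p => by simp), piP, Finsupp.smul_sum]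
  refine Finsupp.sum_congr fun p _ => ?_
  rw [smul_comm]
  exact (Finsupp.smul_single _ _ _).symm

lemma piP_zero (f : (ℝ × ℝ) →₀ H) : piP (0 : ℝ × ℝ) f = f := by
  induction f using Finsupp.induction_linear with
  | zero => exact piP_zero_map 0
  | add f g hf hg => rw [piP_add, hf, hg]
  | single p u => simp [piP_single, ph_zero]

lemma piP_comp (s t : ℝ × ℝ) (f : (ℝ × ℝ) →₀ H) :
    piP s (piP t f) = cexp (I * s.1 * t.2) • piP (s + t) f := by
  induction f using Finsupp.induction_linear with
  | zero => rw [piP_zero_map, piP_zero_map, piP_zero_map, smul_zero]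
  | add f g hf hg => rw [piP_add, piP_add, piP_add, hf, hg, smul_add]
  | single p u =>
    rw [piP_single, piP_single, piP_single, Finsupp.smul_single, smul_smul, smul_smul]
    congr 1
    · rw [add_assoc, add_comm t s]
    · unfold ph
      rw [← Complex.exp_add, ← Complex.exp_add]
      congr 1
      simp only [Prod.fst_add, Prod.snd_add]
      push_cast
      ring

/-- Unitarity (isometry) of the projective translations for the form `BF`. -/
lemma BF_piP (s : ℝ × ℝ) (f g : (ℝ × ℝ) →₀ H) :
    BF σ (piP s f) (piP s g) = BF σ f g := by
  induction f using Finsupp.induction_linear with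
  | zero => rw [piP_zero_map]; simp [BF]
  | add f f' hf hf' => rw [piP_add, BF_add_left, BF_add_left, hf, hf']
  | single p u =>
    induction g using Finsupp.induction_linear with
    | zero => rw [piP_zero_map]; simp [BF]
    | add g g' hg hg' => rw [piP_add, BF_add_right, BF_add_right, hg, hg']
    | single q v =>
      rw [piP_single, piP_single, BF_single_single, BF_single_single, kerI_smul_left,
        kerI_smul_right, kerI_translate]
      have hcoef : (starRingEnd ℂ) (ph (p.1 + s.1) s.2) * ph (q.1 + s.1) s.2 *
          cexp (I * (↑q.1 - ↑p.1) * ↑s.2) = 1 := by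
        unfold ph
        rw [← Complex.exp_conj, ← Complex.exp_add, ← Complex.exp_add, ← Complex.exp_zero]
        congr 1
        rw [map_neg, map_mul, map_mul, Complex.conj_I, Complex.conj_ofReal, Complex.conj_ofReal]
        push_cast
        ring
      linear_combination kerI σ p q u v * hcoef


/-! ### The pre-inner-product space and its completion -/

/-- The pre-Hilbert space underlying the dilation. -/
abbrev Pre (σ : WSetup H) : Type := (ℝ × ℝ) →₀ H

instance : AddCommGroup (Pre σ) := inferInstanceAs (AddCommGroup ((ℝ × ℝ) →₀ H))
instance : Module ℂ (Pre σ) := inferInstanceAs (Module ℂ ((ℝ × ℝ) →₀ H))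

/-- The semi-inner-product core structure on the pre-space. -/
def preCore : PreInnerProductSpace.Core ℂ (Pre σ) where
  inner f g := BF σ f g
  conj_inner_symm f g := BF_conj σ f g
  re_inner_nonneg f := by simpa using BF_nonneg σ f
  add_left f g h := BF_add_left σ f g h
  smul_left f g c := BF_smul_left σ c f g

instance : SeminormedAddCommGroup (Pre σ) :=
  @InnerProductSpace.Core.toSeminormedAddCommGroup ℂ (Pre σ) _ _ _ (preCore σ)

instance : NormedSpace ℂ (Pre σ) :=
  @InnerProductSpace.Core.toNormedSpace ℂ (Pre σ) _ _ _ (preCore σ)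

instance : InnerProductSpace ℂ (Pre σ) where
  inner f g := BF σ f g
  norm_sq_eq_re_inner f := by
    have h1 : ‖f‖ = Real.sqrt (RCLike.re (BF σ f f)) := rfl
    have h2 : (0:ℝ) ≤ RCLike.re (BF σ f f) := by simpa using BF_nonneg σ f
    rw [h1, Real.sq_sqrt h2]
  conj_inner_symm f g := BF_conj σ f g
  add_left f g h := BF_add_left σ f g h
  smul_left f g c := BF_smul_left σ c f g

lemma Pre.inner_def (f g : Pre σ) : ⟪f, g⟫ = BF σ f g := rfl

/-- The dilation Hilbert space: the completion of the pre-space. -/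
abbrev KH (σ : WSetup H) : Type := Completion (Pre σ)

/-- The canonical map from the pre-space to the dilation space. -/
def toK : Pre σ →ₗᵢ[ℂ] KH σ := Completion.toComplₗᵢ (𝕜 := ℂ) (E := Pre σ)

lemma toK_def (f : Pre σ) : toK σ f = ((f : Pre σ) : Completion (Pre σ)) := rfl

lemma inner_toK (f g : Pre σ) : ⟪toK σ f, toK σ g⟫ = BF σ f g :=
  Completion.inner_coe (𝕜 := ℂ) f g

lemma denseRange_toK : DenseRange (toK σ) := Completion.denseRange_coe

/-! ### The extended operators -/

/-- `piP` as a linear isometry on the pre-space. -/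
def piLi (s : ℝ × ℝ) : Pre σ →ₗᵢ[ℂ] Pre σ where
  toFun := piP s
  map_add' := piP_add s
  map_smul' := piP_smul s
  norm_map' f :=
    congrArg (fun z : ℂ => Real.sqrt (RCLike.re z)) (BF_piP σ s f f)

lemma piP_uc (s : ℝ × ℝ) : UniformContinuous (⇑(piLi σ s)) :=
  (piLi σ s).isometry.uniformContinuous

/-- The extension of `piP` to the completion. -/
def UK (s : ℝ × ℝ) : KH σ → KH σ := Completion.map ⇑(piLi σ s)

lemma UK_coe (s : ℝ × ℝ) (f : Pre σ) : UK σ s (toK σ f) = toK σ (piP s f) :=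
  Completion.map_coe (piP_uc σ s) f

lemma UK_cont (s : ℝ × ℝ) : Continuous (UK σ s) := Completion.continuous_map

lemma UK_add (s : ℝ × ℝ) (x y : KH σ) : UK σ s (x + y) = UK σ s x + UK σ s y := by
  refine Completion.induction_on₂ x y ?_ fun f g => ?_
  · apply isClosed_eq
    · exact (UK_cont σ s).comp (continuous_fst.add continuous_snd)
    · exact ((UK_cont σ s).comp continuous_fst).add ((UK_cont σ s).comp continuous_snd)
  · rw [← Completion.coe_add]
    change UK σ s (toK σ (f + g)) = UK σ s (toK σ f) + UK σ s (toK σ g)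
    rw [UK_coe, UK_coe, UK_coe, piP_add]
    exact (toK σ).map_add _ _

lemma UK_smul (s : ℝ × ℝ) (c : ℂ) (x : KH σ) : UK σ s (c • x) = c • UK σ s x := by
  refine Completion.induction_on x ?_ fun f => ?_
  · apply isClosed_eq
    · exact (UK_cont σ s).comp (continuous_const_smul c)
    · exact (UK_cont σ s).const_smul c
  · rw [← Completion.coe_smul]
    change UK σ s (toK σ (c • f)) = c • UK σ s (toK σ f)
    rw [UK_coe, UK_coe, piP_smul]
    exact (toK σ).map_smul _ _

lemma UK_norm (s : ℝ × ℝ) (x : KH σ) : ‖UK σ s x‖ = ‖x‖ := by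
  refine Completion.induction_on x ?_ fun f => ?_
  · exact isClosed_eq (continuous_norm.comp (UK_cont σ s)) continuous_norm
  · change ‖UK σ s (toK σ f)‖ = ‖toK σ f‖
    rw [UK_coe, (toK σ).norm_map, (toK σ).norm_map]
    exact (piLi σ s).norm_map f

lemma UK_id (x : KH σ) : UK σ (0 : ℝ × ℝ) x = x := by
  refine Completion.induction_on x ?_ fun f => ?_
  · exact isClosed_eq (UK_cont σ 0) continuous_id
  · change UK σ 0 (toK σ f) = toK σ f
    rw [UK_coe, piP_zero]

lemma UK_comp (s t : ℝ × ℝ) (x : KH σ) :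
    UK σ s (UK σ t x) = cexp (I * s.1 * t.2) • UK σ (s + t) x := by
  refine Completion.induction_on x ?_ fun f => ?_
  · apply isClosed_eq
    · exact (UK_cont σ s).comp (UK_cont σ t)
    · exact (UK_cont σ (s + t)).const_smul (cexp (I * s.1 * t.2))
  · change UK σ s (UK σ t (toK σ f)) = cexp (I * s.1 * t.2) • UK σ (s + t) (toK σ f)
    rw [UK_coe, UK_coe, UK_coe, piP_comp]
    exact (toK σ).map_smul _ _


lemma UK_sub (s : ℝ × ℝ) (x y : KH σ) : UK σ s (x - y) = UK σ s x - UK σ s y := by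
  rw [sub_eq_add_neg, UK_add, sub_eq_add_neg, show -y = (-1 : ℂ) • y by simp,
    UK_smul, neg_one_smul]

lemma UK_U_group (a b : ℝ) (x : KH σ) :
    UK σ (a, 0) (UK σ (b, 0) x) = UK σ (a + b, 0) x := by
  rw [UK_comp]
  norm_num [Prod.mk_add_mk]

lemma UK_V_group (a b : ℝ) (x : KH σ) :
    UK σ (0, a) (UK σ (0, b) x) = UK σ (0, a + b) x := by
  rw [UK_comp]
  norm_num [Prod.mk_add_mk]

lemma UK_weyl (a b : ℝ) (x : KH σ) :
    UK σ (a, 0) (UK σ (0, b) x) = cexp (I * a * b) • UK σ (0, b) (UK σ (a, 0) x) := by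
  rw [UK_comp, UK_comp]
  norm_num [Prod.mk_add_mk]

/-- The dilated unitary group `U`. -/
def Ueq (a : ℝ) : KH σ ≃ₗᵢ[ℂ] KH σ where
  toLinearEquiv :=
    { toFun := UK σ (a, 0)
      map_add' := UK_add σ _
      map_smul' := UK_smul σ _
      invFun := UK σ (-a, 0)
      left_inv := fun x => by
        have h := UK_U_group σ (-a) a x
        rw [neg_add_cancel] at h
        exact h.trans (UK_id σ x)
      right_inv := fun x => by
        have h := UK_U_group σ a (-a) x
        rw [add_neg_cancel] at h
        exact h.trans (UK_id σ x) }
  norm_map' := UK_norm σ _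

/-- The dilated unitary group `V`. -/
def Veq (b : ℝ) : KH σ ≃ₗᵢ[ℂ] KH σ where
  toLinearEquiv :=
    { toFun := UK σ (0, b)
      map_add' := UK_add σ _
      map_smul' := UK_smul σ _
      invFun := UK σ (0, -b)
      left_inv := fun x => by
        have h := UK_V_group σ (-b) b x
        rw [neg_add_cancel] at h
        exact h.trans (UK_id σ x)
      right_inv := fun x => by
        have h := UK_V_group σ b (-b) x
        rw [add_neg_cancel] at h
        exact h.trans (UK_id σ x) }
  norm_map' := UK_norm σ _

lemma Ueq_apply (a : ℝ) (x : KH σ) : Ueq σ a x = UK σ (a, 0) x := rfl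

lemma Veq_apply (b : ℝ) (x : KH σ) : Veq σ b x = UK σ (0, b) x := rfl

/-! ### The embedding of `H` -/

/-- The embedding of `H` into the pre-space. -/
def eH : H →ₗᵢ[ℂ] Pre σ :=
  ⟨(Finsupp.lsingle ((0:ℝ), (0:ℝ)) : H →ₗ[ℂ] ((ℝ × ℝ) →₀ H)), fun h => by
    have h2 : (Finsupp.lsingle ((0:ℝ), (0:ℝ)) : H →ₗ[ℂ] ((ℝ × ℝ) →₀ H)) h
        = Finsupp.single ((0:ℝ), (0:ℝ)) h := Finsupp.lsingle_apply _ _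
    have h1 : ∀ f : Pre σ, ‖f‖ = Real.sqrt (RCLike.re (BF σ f f)) := fun _ => rfl
    rw [h1]
    change Real.sqrt (RCLike.re (BF σ (Finsupp.single ((0:ℝ), (0:ℝ)) h)
      (Finsupp.single ((0:ℝ), (0:ℝ)) h))) = ‖h‖
    rw [BF_single_single, kerI_self,
      show RCLike.re (⟪h, h⟫) = ‖h‖ * ‖h‖ from inner_self_eq_norm_mul_norm h]
    exact Real.sqrt_mul_self (norm_nonneg h)⟩

/-- The embedding of `H` into the dilation space. -/
def eK : H →ₗᵢ[ℂ] KH σ := (toK σ).comp (eH σ)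

lemma kerI_S {a : ℝ} (ha : 0 ≤ a) (g h : H) :
    kerI σ ((0:ℝ), (0:ℝ)) (a, (0:ℝ)) g h = ⟪g, σ.S a h⟫ := by
  have hD : DD ((0:ℝ), (0:ℝ)) (a, (0:ℝ)) = 0 := by norm_num [DD]
  rw [kerI, hD]
  simp [σ.hT0, Ssh_of_nonneg σ ha]

lemma kerI_T {b : ℝ} (hb : 0 ≤ b) (g h : H) :
    kerI σ ((0:ℝ), (0:ℝ)) ((0:ℝ), b) g h = ⟪g, σ.T b h⟫ := by
  have hD : DD ((0:ℝ), (0:ℝ)) ((0:ℝ), b) = 0 := by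
    simp [DD, neg_nonpos.mpr hb, max_eq_left]
  rw [kerI, hD]
  simp [σ.hT0, Ssh_zero]

lemma piP_single_U (a : ℝ) (h : H) :
    piP ((a:ℝ), (0:ℝ)) (Finsupp.single ((0:ℝ), (0:ℝ)) h) = Finsupp.single (a, (0:ℝ)) h := by
  rw [piP_single]
  norm_num [ph_zero, Prod.mk_add_mk]

lemma piP_single_V (b : ℝ) (h : H) :
    piP ((0:ℝ), (b:ℝ)) (Finsupp.single ((0:ℝ), (0:ℝ)) h) = Finsupp.single ((0:ℝ), b) h := by
  rw [piP_single]
  norm_num [ph, Prod.mk_add_mk]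

lemma compress_U' {a : ℝ} (ha : 0 ≤ a) (g h : H) :
    ⟪eK σ g, UK σ (a, 0) (eK σ h)⟫ = ⟪g, σ.S a h⟫ := by
  change ⟪toK σ (eH σ g), UK σ (a, 0) (toK σ (eH σ h))⟫ = _
  rw [UK_coe, inner_toK]
  change BF σ (Finsupp.single ((0:ℝ), (0:ℝ)) g) (piP (a, 0) (Finsupp.single ((0:ℝ), (0:ℝ)) h)) = _
  rw [piP_single_U, BF_single_single, kerI_S σ ha]

lemma compress_V' {b : ℝ} (hb : 0 ≤ b) (g h : H) :
    ⟪eK σ g, UK σ (0, b) (eK σ h)⟫ = ⟪g, σ.T b h⟫ := by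
  change ⟪toK σ (eH σ g), UK σ (0, b) (toK σ (eH σ h))⟫ = _
  rw [UK_coe, inner_toK]
  change BF σ (Finsupp.single ((0:ℝ), (0:ℝ)) g) (piP (0, b) (Finsupp.single ((0:ℝ), (0:ℝ)) h)) = _
  rw [piP_single_V, BF_single_single, kerI_T σ hb]


/-! ### Strong continuity -/

lemma BF_zero_left (g : (ℝ × ℝ) →₀ H) : BF σ 0 g = 0 := by simp [BF]

lemma BF_single_left (x : ℝ × ℝ) (w : H) (g : (ℝ × ℝ) →₀ H) :
    BF σ (Finsupp.single x w) g = ∑ q ∈ g.support, kerI σ x q w (g q) := by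
  rw [BF_eq_sum σ Finsupp.support_single_subset (Finset.Subset.refl _) (s := {x})]
  simp [Finsupp.single_eq_same]

lemma cont_BF_piP (f g : (ℝ × ℝ) →₀ H) :
    Continuous fun t : ℝ × ℝ => BF σ (piP t f) g := by
  induction f using Finsupp.induction_linear with
  | zero =>
    simp only [piP_zero_map, BF_zero_left]
    exact continuous_const
  | add f f' hf hf' =>
    simp only [piP_add, BF_add_left]
    exact hf.add hf'
  | single p u =>
    simp only [piP_single, BF_single_left, kerI_smul_left]
    refine continuous_finset_sum _ fun q _ => ?_
    refine Continuous.mul ?_ ((kerI_cont σ p q u (g q)).comp (continuous_id))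
    unfold ph
    refine continuous_star.comp (Complex.continuous_exp.comp ?_)
    have : Continuous fun t : ℝ × ℝ => ((p.1 + t.1 : ℝ) : ℂ) :=
      Complex.continuous_ofReal.comp (continuous_const.add continuous_fst)
    have h2 : Continuous fun t : ℝ × ℝ => ((t.2 : ℝ) : ℂ) :=
      Complex.continuous_ofReal.comp continuous_snd
    continuity

/-- Strong continuity of the extended operators along a continuous parameterization. -/
lemma UK_param_cont (φ : ℝ → ℝ × ℝ) (hφ : Continuous φ) (k : KH σ) :
    Continuous fun a : ℝ => UK σ (φ a) k := by
  rw [continuous_iff_continuousAt]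
  intro a₀
  rw [ContinuousAt, Metric.tendsto_nhds]
  intro ε hε
  obtain ⟨f, hf⟩ : ∃ f : Pre σ, dist k (toK σ f) < ε / 3 := by
    have := Metric.denseRange_iff.mp (denseRange_toK σ)
    exact this k (ε / 3) (by linarith)
  -- the middle term tends to zero
  have hnormsq : ∀ t s' : ℝ × ℝ, ‖UK σ t (toK σ f) - UK σ s' (toK σ f)‖ ^ 2
      = 2 * ((BF σ f f).re) - 2 * ((BF σ (piP t f) (piP s' f)).re) := by
    intro t s'
    rw [UK_coe, UK_coe, @norm_sub_sq ℂ _ _ _ _ ((toK σ) (piP t f)) ((toK σ) (piP s' f)),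
      (toK σ).norm_map, (toK σ).norm_map, inner_toK]
    have hn : ∀ h' : Pre σ, ‖h'‖ ^ 2 = (BF σ h' h').re := fun h' => by
      have h1 : ‖h'‖ = Real.sqrt (RCLike.re (BF σ h' h')) := rfl
      rw [h1, Real.sq_sqrt]
      · rfl
      · simpa using BF_nonneg σ h'
    rw [hn, hn, BF_piP, BF_piP]
    have : RCLike.re (BF σ (piP t f) (piP s' f)) = (BF σ (piP t f) (piP s' f)).re := rfl
    rw [this]
    ring
  have hmid : Tendsto (fun a : ℝ => ‖UK σ (φ a) (toK σ f) - UK σ (φ a₀) (toK σ f)‖)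
      (nhds a₀) (nhds 0) := by
    have hg : Tendsto (fun a : ℝ => 2 * ((BF σ f f).re)
        - 2 * ((BF σ (piP (φ a) f) (piP (φ a₀) f)).re)) (nhds a₀) (nhds 0) := by
      have hc : Continuous fun a : ℝ => 2 * ((BF σ f f).re)
          - 2 * ((BF σ (piP (φ a) f) (piP (φ a₀) f)).re) :=
        continuous_const.sub (continuous_const.mul
          (Complex.continuous_re.comp ((cont_BF_piP σ f (piP (φ a₀) f)).comp hφ)))
      have hval : 2 * ((BF σ f f).re) - 2 * ((BF σ (piP (φ a₀) f) (piP (φ a₀) f)).re) = 0 := by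
        rw [BF_piP]
        ring
      have := hc.tendsto a₀
      rwa [hval] at this
    have hsq : ∀ a : ℝ, ‖UK σ (φ a) (toK σ f) - UK σ (φ a₀) (toK σ f)‖
        = Real.sqrt (2 * ((BF σ f f).re) - 2 * ((BF σ (piP (φ a) f) (piP (φ a₀) f)).re)) := by
      intro a
      rw [← hnormsq]
      exact (Real.sqrt_sq (norm_nonneg _)).symm
    have := (Real.continuous_sqrt.tendsto 0).comp hg
    rw [Real.sqrt_zero] at this
    exact this.congr fun a => (hsq a).symm
  have hev : ∀ᶠ a in nhds a₀, ‖UK σ (φ a) (toK σ f) - UK σ (φ a₀) (toK σ f)‖ < ε / 3 := by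
    have h3 : (0:ℝ) < ε / 3 := by linarith
    exact hmid.eventually_lt_const h3
  filter_upwards [hev] with a ha
  have e1 : dist (UK σ (φ a) k) (UK σ (φ a) (toK σ f)) = dist k (toK σ f) := by
    rw [dist_eq_norm, ← UK_sub, UK_norm, dist_eq_norm]
  have e3 : dist (UK σ (φ a₀) (toK σ f)) (UK σ (φ a₀) k) = dist k (toK σ f) := by
    rw [dist_eq_norm, ← UK_sub, UK_norm, ← dist_eq_norm, dist_comm]
  have e2 : dist (UK σ (φ a) (toK σ f)) (UK σ (φ a₀) (toK σ f))
      = ‖UK σ (φ a) (toK σ f) - UK σ (φ a₀) (toK σ f)‖ := dist_eq_norm _ _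
  calc dist (UK σ (φ a) k) (UK σ (φ a₀) k)
      ≤ dist (UK σ (φ a) k) (UK σ (φ a) (toK σ f))
        + dist (UK σ (φ a) (toK σ f)) (UK σ (φ a₀) (toK σ f))
        + dist (UK σ (φ a₀) (toK σ f)) (UK σ (φ a₀) k) := dist_triangle4 _ _ _ _
    _ < ε / 3 + ε / 3 + ε / 3 := by
        rw [e1, e3, e2]
        exact add_lt_add (add_lt_add hf ha) hf
    _ = ε := by ring

end WeylDilationAux

/-- A unitary dilation of a pair of isometric semigroups `S, T` on `H` to a pair of strongly
continuous one-parameter unitary groups `U, V` on a larger Hilbert space `K`, satisfying the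
Weyl commutation relations, such that `P_H U_λ|_H = S_λ` and `P_H V_μ|_H = T_μ` for
`λ, μ ≥ 0` (expressed via inner products against the isometric embedding `e : H → K`). -/
structure WeylUnitaryDilation {H : Type} [NormedAddCommGroup H] [InnerProductSpace ℂ H]
    (S T : ℝ → H →L[ℂ] H) where
  K : Type
  [instN : NormedAddCommGroup K]
  [instI : InnerProductSpace ℂ K]
  [instC : CompleteSpace K]
  e : H →ₗᵢ[ℂ] K
  U : ℝ → K ≃ₗᵢ[ℂ] K
  V : ℝ → K ≃ₗᵢ[ℂ] K
  U_zero : ∀ k : K, U 0 k = k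
  V_zero : ∀ k : K, V 0 k = k
  U_add : ∀ a b : ℝ, ∀ k : K, U (a + b) k = U a (U b k)
  V_add : ∀ a b : ℝ, ∀ k : K, V (a + b) k = V a (V b k)
  U_cont : ∀ k : K, Continuous fun a : ℝ => U a k
  V_cont : ∀ k : K, Continuous fun b : ℝ => V b k
  weyl : ∀ a b : ℝ, ∀ k : K,
    U a (V b k) = Complex.exp (Complex.I * a * b) • V b (U a k)
  compress_U : ∀ a : ℝ, 0 ≤ a → ∀ g h : H,
    (inner ℂ (e g) (U a (e h)) : ℂ) = inner ℂ g (S a h)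
  compress_V : ∀ b : ℝ, 0 ≤ b → ∀ g h : H,
    (inner ℂ (e g) (V b (e h)) : ℂ) = inner ℂ g (T b h)

/-- Every pair of strongly continuous semigroups of isometries satisfying the Weyl
commutation relations dilates to a pair of strongly continuous one-parameter unitary groups
on a larger Hilbert space satisfying the Weyl commutation relations. -/
theorem isometric_weyl_dilation {H : Type} [NormedAddCommGroup H]
    [InnerProductSpace ℂ H] [CompleteSpace H]
    (S T : ℝ → H →L[ℂ] H)
    (hSiso : ∀ a : ℝ, 0 ≤ a → Isometry (S a))
    (hTiso : ∀ b : ℝ, 0 ≤ b → Isometry (T b))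
    (hS0 : S 0 = ContinuousLinearMap.id ℂ H)
    (hT0 : T 0 = ContinuousLinearMap.id ℂ H)
    (hSadd : ∀ a b : ℝ, 0 ≤ a → 0 ≤ b → S (a + b) = (S a).comp (S b))
    (hTadd : ∀ a b : ℝ, 0 ≤ a → 0 ≤ b → T (a + b) = (T a).comp (T b))
    (hScont : ∀ h : H, ContinuousOn (fun a : ℝ => S a h) (Ici 0))
    (hTcont : ∀ h : H, ContinuousOn (fun b : ℝ => T b h) (Ici 0))
    (hweyl : ∀ a b : ℝ, 0 ≤ a → 0 ≤ b →
      (S a).comp (T b) = Complex.exp (Complex.I * a * b) • (T b).comp (S a)) :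
    Nonempty (WeylUnitaryDilation S T) := by
  classical
  let σ : WeylDilationAux.WSetup H :=
    ⟨S, T, hSiso, hTiso, hS0, hT0, hSadd, hTadd, hScont, hTcont, hweyl⟩
  refine ⟨{
    K := WeylDilationAux.KH σ
    e := WeylDilationAux.eK σ
    U := WeylDilationAux.Ueq σ
    V := WeylDilationAux.Veq σ
    U_zero := fun k => WeylDilationAux.UK_id σ k
    V_zero := fun k => WeylDilationAux.UK_id σ k
    U_add := fun a b k => (WeylDilationAux.UK_U_group σ a b k).symm
    V_add := fun a b k => (WeylDilationAux.UK_V_group σ a b k).symm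
    U_cont := fun k => WeylDilationAux.UK_param_cont σ (fun a => (a, 0))
      (continuous_id.prodMk continuous_const) k
    V_cont := fun k => WeylDilationAux.UK_param_cont σ (fun b => (0, b))
      (continuous_const.prodMk continuous_id) k
    weyl := fun a b k => WeylDilationAux.UK_weyl σ a b k
    compress_U := fun a ha g h => WeylDilationAux.compress_U' σ ha g h
    compress_V := fun b hb g h => WeylDilationAux.compress_V' σ hb g h }⟩
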